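/- Let Y be a set of non-overlapping closed intervals on {0,...,T-1}, with |Y| = M, and let ε > 0. Let S be an ideal interval scoring matrix for Y and S' the matrix obtained by subtracting the first column of S from every column of S. Then S'(i,j) > ε for [i,j] ∈ Y with j ≠ 0, S'(i,j) = 0 otherwise, and rank(S) = rank(S') + 1. -/

import Mathlib

/-- `Y` is a set of non-overlapping closed intervals on `{0, ..., T-1}`:
each interval `(i, j)` satisfies `i < j ≤ T-1`, and any two distinct intervals
`(i₀, j₀)`, `(i₁, j₁)` satisfy `i₀ ≥ j₁` or `i₁ ≥ j₀`. -/
def NonOverlap (T : ℕ) (Y : Finset (ℕ × ℕ)) : Prop :=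
  (∀ p ∈ Y, p.1 < p.2 ∧ p.2 < T) ∧
  (∀ p ∈ Y, ∀ q ∈ Y, p ≠ q → q.2 ≤ p.1 ∨ p.2 ≤ q.1)

theorem column_subtraction_rank (T : ℕ) (hT : 0 < T) (Y : Finset (ℕ × ℕ))
    (hY : NonOverlap T Y) (ε : ℝ) (hε : 0 < ε)
    (S : Matrix (Fin T) (Fin T) ℝ)
    (hpos : ∀ i j : Fin T, ((i : ℕ), (j : ℕ)) ∈ Y → 0 < S i j)
    (hneg : ∀ i j : Fin T, ((i : ℕ), (j : ℕ)) ∉ Y → S i j = -ε) :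
    ∀ S' : Matrix (Fin T) (Fin T) ℝ,
      (∀ i j : Fin T, S' i j = S i j - S i ⟨0, hT⟩) →
      (∀ i j : Fin T, ((i : ℕ), (j : ℕ)) ∈ Y → (j : ℕ) ≠ 0 → ε < S' i j) ∧
      (∀ i j : Fin T, ((i : ℕ), (j : ℕ)) ∉ Y ∨ (j : ℕ) = 0 → S' i j = 0) ∧
      S.rank = S'.rank + 1 := by
  intro S' hS'
  obtain ⟨h1, _h2⟩ := hY
  have hY0 : ∀ i : ℕ, (i, 0) ∉ Y := by
    intro i h
    have := (h1 _ h).1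
    omega
  have hScol0 : ∀ i : Fin T, S i ⟨0, hT⟩ = -ε := fun i => hneg i ⟨0, hT⟩ (hY0 i)
  have hEntry : ∀ i j : Fin T, S i j = S' i j - ε := by
    intro i j; rw [hS' i j, hScol0 i]; ring
  refine ⟨?_, ?_, ?_⟩
  · intro i j hij _
    rw [hS' i j, hScol0]
    have := hpos i j hij; linarith
  · intro i j hij
    have hnot : ((i : ℕ), (j : ℕ)) ∉ Y := by
      rcases hij with h | h
      · exact h
      · rw [h]; exact hY0 i
    rw [hS' i j, hScol0, hneg i j hnot]; ring
  · -- rank statement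
    set ones : Fin T → ℝ := fun _ => 1 with hones
    have hone_ne : ones ≠ 0 := by
      intro h
      have := congrFun h ⟨0, hT⟩
      simp [hones] at this
    set iL : Fin T := ⟨T - 1, by omega⟩ with hiL
    -- last row of S' is zero
    have hlast : ∀ j : Fin T, S' iL j = 0 := by
      intro j
      have hnot : ((iL : ℕ), (j : ℕ)) ∉ Y := by
        intro h
        have := (h1 _ h).1
        have := (h1 _ h).2
        have := j.isLt
        have hv : (iL : ℕ) = T - 1 := rfl
        omega
      rw [hS' iL j, hScol0, hneg iL j hnot]; ring
    -- key mulVec relation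
    have hmul : ∀ x : Fin T → ℝ, S.mulVec x = S'.mulVec x - (ε * ∑ j, x j) • ones := by
      intro x
      funext i
      simp only [Matrix.mulVec, dotProduct, Pi.sub_apply, Pi.smul_apply, hones,
        smul_eq_mul, mul_one]
      rw [Finset.mul_sum, ← Finset.sum_sub_distrib]
      apply Finset.sum_congr rfl
      intro j _
      rw [hEntry i j]; ring
    -- column 0 of S' is zero
    have hcol0 : ∀ i : Fin T, S' i ⟨0, hT⟩ = 0 := by
      intro i
      rw [hS' i ⟨0, hT⟩]; ring
    -- ones is in the range of S
    have hones_mem : ones ∈ LinearMap.range S.mulVecLin := by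
      refine ⟨Pi.single ⟨0, hT⟩ (-ε⁻¹), ?_⟩
      funext i
      simp only [Matrix.mulVecLin_apply, Matrix.mulVec_single, hScol0, hones]
      change S i ⟨0, hT⟩ * -ε⁻¹ = 1
      rw [hScol0, neg_mul_neg, mul_inv_cancel₀ hε.ne']
    -- range of S' is contained in range of S
    have hS'sub : LinearMap.range S'.mulVecLin ≤ LinearMap.range S.mulVecLin := by
      rintro _ ⟨x, rfl⟩
      set y : Fin T → ℝ := x - (∑ j, x j) • (Pi.single (⟨0, hT⟩ : Fin T) (1 : ℝ) : Fin T → ℝ) with hy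
      refine ⟨y, ?_⟩
      have hsum : ∑ j, y j = 0 := by
        simp only [hy]
        simp only [Pi.sub_apply, Pi.smul_apply, smul_eq_mul, Finset.sum_sub_distrib]
        rw [← Finset.mul_sum, Finset.sum_pi_single']
        simp
      rw [Matrix.mulVecLin_apply, hmul, hsum]
      simp only [mul_zero, zero_smul, sub_zero]
      rw [hy, Matrix.mulVec_sub, Matrix.mulVec_smul, Matrix.mulVec_single,
        Matrix.mulVecLin_apply]
      funext i
      simp [hcol0 i]
    -- range of S equals range of S' plus span of ones
    have hrange : LinearMap.range S.mulVecLin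
        = LinearMap.range S'.mulVecLin ⊔ (ℝ ∙ ones) := by
      apply le_antisymm
      · rintro _ ⟨x, rfl⟩
        rw [Matrix.mulVecLin_apply, hmul]
        apply Submodule.sub_mem_sup
        · exact ⟨x, rfl⟩
        · exact Submodule.smul_mem _ _ (Submodule.mem_span_singleton_self ones)
      · apply sup_le hS'sub
        rw [Submodule.span_singleton_le_iff_mem]
        exact hones_mem
    -- ones not in range of S'
    have hones_not : ones ∉ LinearMap.range S'.mulVecLin := by
      rintro ⟨x, hx⟩
      have := congrFun hx iL
      simp only [Matrix.mulVecLin_apply, Matrix.mulVec, dotProduct, hones] at this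
      rw [Finset.sum_eq_zero (fun j _ => by rw [hlast j, zero_mul])] at this
      exact zero_ne_one this
    -- finish with finrank arithmetic
    have hdisj : Disjoint (LinearMap.range S'.mulVecLin) (ℝ ∙ ones) :=
      (Submodule.disjoint_span_singleton' hone_ne).mpr hones_not
    rw [Matrix.rank, Matrix.rank, hrange]
    have := Submodule.finrank_sup_add_finrank_inf_eq
      (LinearMap.range S'.mulVecLin) (ℝ ∙ ones)
    rw [hdisj.eq_bot, finrank_bot, finrank_span_singleton hone_ne] at this
    omega
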